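/- Every forward slide (k_0, ..., k_r) on a tabloid T decomposes as a product of r exchanges: (k_0,...,k_r) = (k_r,k_0)···(k_2,k_0)(k_1,k_0), where each transposition (k_i,k_0) is an exchange (a transposition of entries in neighbouring cells) on the tabloid (k_{i−1},k_0)···(k_1,k_0) ∘ T. -/

import Mathlib

open Finset

namespace NPS

/-- A tabloid of shape `μ`: a bijection from the cells of `μ` onto `{1, …, n}`,
zero outside `μ`. -/
def IsTabloid (μ : YoungDiagram) (T : ℕ × ℕ → ℕ) : Prop :=
  Set.BijOn T ↑μ.cells (Set.Icc 1 μ.card) ∧ ∀ x ∉ μ.cells, T x = 0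

/-- `b` is a right or bottom neighbour of `a`. -/
def NextCell (a b : ℕ × ℕ) : Prop := b = (a.1, a.2 + 1) ∨ b = (a.1 + 1, a.2)

/-- `ks = [k_0, …, k_r]` is (the entry list of) a forward slide on `T` at `x`:
the entries lie along a path of cells of `μ` starting at `x` and moving right or down,
`k_1 < k_2 < … < k_r`, and `k_0 > k_r` (if `r ≥ 1`).  The associated permutation is
the cycle `(k_0, …, k_r)`, i.e. `ks.formPerm`. -/
def IsForwardSlide (μ : YoungDiagram) (T : ℕ × ℕ → ℕ) (x : ℕ × ℕ) (ks : List ℕ) : Prop :=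
  ∃ c : List (ℕ × ℕ),
    c.head? = some x ∧ (∀ y ∈ c, y ∈ μ.cells) ∧
    List.Chain' NextCell c ∧ ks = c.map T ∧
    List.Chain' (· < ·) ks.tail ∧
    (1 < ks.length → ∀ m ∈ ks.getLast?, m < T x)

/-- The transposition (k, l) is an exchange on T: k and l occupy adjacent cells of μ. -/
def IsExchange (μ : YoungDiagram) (T : ℕ × ℕ → ℕ) (k l : ℕ) : Prop :=
  ∃ a b : ℕ × ℕ, a ∈ μ.cells ∧ b ∈ μ.cells ∧ (NextCell a b ∨ NextCell b a) ∧
    T a = k ∧ T b = l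

lemma prod_apply_fix (L : List (Equiv.Perm ℕ)) (v : ℕ)
    (h : ∀ g ∈ L, g v = v) : L.prod v = v := by
  induction L with
  | nil => simp
  | cons g L ih =>
    rw [List.prod_cons, Equiv.Perm.mul_apply,
      ih (fun g hg => h g (List.mem_cons_of_mem _ hg)), h g List.mem_cons_self]

lemma conj_prod (c : Equiv.Perm ℕ) (L : List (Equiv.Perm ℕ)) :
    c * L.prod * c⁻¹ = (L.map fun g => c * g * c⁻¹).prod := by
  induction L with
  | nil => simp
  | cons g L ih => rw [List.prod_cons, List.map_cons, List.prod_cons, ← ih]; group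

lemma formPerm_eq (a : ℕ) (t : List ℕ) (h : (a :: t).Nodup) :
    (a :: t).formPerm = ((t.map fun k => Equiv.swap k a).reverse).prod := by
  induction t generalizing a with
  | nil => simp [List.formPerm_singleton]
  | cons b s ih =>
    have hab : a ≠ b := by simp only [List.nodup_cons, List.mem_cons] at h; tauto
    have hks : ∀ k ∈ s, k ≠ a ∧ k ≠ b := by
      intro k hk
      simp only [List.nodup_cons, List.mem_cons] at h
      exact ⟨fun e => h.1 (Or.inr (e ▸ hk)), fun e => h.2.1 (e ▸ hk)⟩
    rw [List.formPerm_cons_cons, ih b h.of_cons]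
    have key : (((s.map fun k => Equiv.swap k b).reverse).map
        fun g => Equiv.swap a b * g * (Equiv.swap a b)⁻¹)
        = (s.map fun k => Equiv.swap k a).reverse := by
      rw [← List.map_reverse, ← List.map_reverse, List.map_map]
      refine List.map_congr_left fun k hk => ?_
      obtain ⟨hka, hkb⟩ := hks k (List.mem_reverse.mp hk)
      have := Equiv.swap_apply_apply (Equiv.swap a b) k b
      rw [Equiv.swap_apply_of_ne_of_ne hka hkb, Equiv.swap_apply_right] at this
      exact this.symm
    have h2 := conj_prod (Equiv.swap a b) ((s.map fun k => Equiv.swap k b).reverse)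
    rw [key] at h2
    have h3 : Equiv.swap a b * ((s.map fun k => Equiv.swap k b).reverse).prod
        = ((s.map fun k => Equiv.swap k a).reverse).prod * Equiv.swap a b := by
      rw [← h2]; group
    rw [h3, List.map_cons, List.reverse_cons, List.prod_append, List.prod_singleton,
      Equiv.swap_comm b a]

/-- A forward slide (k_0, ..., k_r) decomposes as the product of the r exchanges
(k_r,k_0)...(k_2,k_0)(k_1,k_0), each (k_i,k_0) being an exchange on
(k_{i-1},k_0)...(k_1,k_0) composed with T. -/
theorem stmt12 (μ : YoungDiagram) (T : ℕ × ℕ → ℕ) (hT : IsTabloid μ T)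
    (x : ℕ × ℕ) (ks : List ℕ) (hks : IsForwardSlide μ T x ks) :
    ks.formPerm = ((ks.tail.map fun k => Equiv.swap k (T x)).reverse).prod ∧
    ∀ i : ℕ, ∀ h : i < ks.tail.length,
      IsExchange μ
        (⇑(((ks.tail.take i).map fun k => Equiv.swap k (T x)).reverse.prod) ∘ T)
        (ks.tail.get ⟨i, h⟩) (T x) := by
  obtain ⟨c, hhead, hmem, hchain, hmap, hincr, hlast⟩ := hks
  obtain ⟨x', cs, rfl⟩ : ∃ x' cs, c = x' :: cs := by
    cases c with
    | nil => simp at hhead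
    | cons y cs => exact ⟨y, cs, rfl⟩
  have hx : x = x' := by simpa using hhead.symm
  subst hx
  subst hmap
  simp only [List.map_cons, List.tail_cons] at hincr hlast ⊢
  set t : List ℕ := cs.map T with ht
  have hsorted : t.Pairwise (· < ·) := List.isChain_iff_pairwise.mp hincr
  have hlt : ∀ m ∈ t, m < T x := by
    intro m hm
    have hne : t ≠ [] := List.ne_nil_of_mem hm
    have hlen : 1 < (T x :: t).length := by
      simp only [List.length_cons]
      have := List.length_pos_iff.mpr hne
      omega
    have hgl : t.getLast hne < T x := by
      refine hlast hlen (t.getLast hne) ?_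
      rw [List.getLast?_eq_getLast (List.cons_ne_nil _ _),
        List.getLast_cons hne]
      simp
    obtain ⟨i, hi, rfl⟩ := List.getElem_of_mem hm
    rcases eq_or_lt_of_le (Nat.le_pred_of_lt hi) with he | hlt'
    · rw [List.getLast_eq_getElem] at hgl
      subst he
      exact hgl
    · have := (List.pairwise_iff_getElem.mp hsorted) i (t.length - 1)
        hi (by omega) hlt'
      rw [← List.getLast_eq_getElem hne] at this
      exact this.trans hgl
  have hnodup : (T x :: t).Nodup := by
    rw [List.nodup_cons]
    exact ⟨fun hmem' => absurd (hlt _ hmem') (lt_irrefl _),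
      (hsorted.imp fun h => ne_of_lt h)⟩
  -- fixedness fact
  have fixA : ∀ j (hj : j < t.length),
      (((t.take j).map fun k => Equiv.swap k (T x)).reverse.prod) t[j] = t[j] := by
    intro j hj
    apply prod_apply_fix
    intro g hg
    rw [List.mem_reverse, List.mem_map] at hg
    obtain ⟨k, hk, rfl⟩ := hg
    have hmemdrop : t[j] ∈ t.drop j := by
      rw [List.mem_iff_getElem]
      exact ⟨0, by simp [List.length_drop]; omega, by simp⟩
    have hklt : k < t[j] := hsorted.rel_of_mem_take_of_mem_drop hk hmemdrop
    exact Equiv.swap_apply_of_ne_of_ne hklt.ne' (hlt _ (List.getElem_mem hj)).ne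
  constructor
  · exact formPerm_eq (T x) t hnodup
  · intro i h
    have hlen : i < cs.length := by simpa using h
    have hlen1 : i + 1 < (x :: cs).length := by simp; omega
    have hlen0 : i < (x :: cs).length := by simp; omega
    set a : ℕ × ℕ := (x :: cs)[i + 1] with haa
    set b : ℕ × ℕ := (x :: cs)[i] with hbb
    have hnext : NextCell b a := by
      have := List.isChain_iff_getElem.mp hchain i (by simp; omega)
      exact this
    refine ⟨a, b, hmem a (List.getElem_mem hlen1), hmem b (List.getElem_mem hlen0),
      Or.inr hnext, ?_, ?_⟩
    · -- (σ_i ∘ T) a = t.get i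
      have hTa : T a = t[i] := by
        rw [haa]
        simp [ht]
      simp only [Function.comp_apply, hTa, List.get_eq_getElem]
      exact fixA i h
    · -- (σ_i ∘ T) b = T x
      cases i with
      | zero =>
        have hTb : T b = T x := by rw [hbb]; simp
        simp [hTb]
      | succ j =>
        have hTb : T b = t[j] := by rw [hbb]; simp [ht]
        have hj : j < t.length := by rw [ht, List.length_map]; omega
        have htake : t.take (j + 1) = t.take j ++ [t[j]] := by
          rw [← List.take_concat_get' t j hj]
        simp only [Function.comp_apply, hTb, ← ht, htake, List.map_append, List.reverse_append,
          List.map_cons, List.map_nil, List.reverse_cons, List.reverse_nil, List.nil_append,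
          List.singleton_append, List.prod_cons, Equiv.Perm.mul_apply]
        rw [fixA j hj, Equiv.swap_apply_left]


end NPS
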